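/- If α ∈ ℝ and (s_j)_{j=0}^{κ} is an α-Stieltjes right-nonnegative definite sequence of complex q×q matrices (i.e., belongs to K^{≥}_{q,κ,α}), then the sequence (s_j^{(1,α)})_{j=0}^{κ−1} defined by s_j^{(1,α)} := -s_{j+1}^{♯,α} is again α-Stieltjes right-nonnegative definite, i.e., belongs to K^{≥}_{q,κ−1,α}. -/

import Mathlib

open Matrix BigOperators ComplexOrder

def IsMP {m n : Type*} [Fintype m] [Fintype n] (A : Matrix m n ℂ) (B : Matrix n m ℂ) : Prop :=
  A * B * A = A ∧ B * A * B = B ∧ (A * B)ᴴ = A * B ∧ (B * A)ᴴ = B * A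

open Classical in
noncomputable def mp {m n : Type*} [Fintype m] [Fintype n] (A : Matrix m n ℂ) : Matrix n m ℂ :=
  if h : ∃ B, IsMP A B then h.choose else 0

noncomputable def recip {p q : ℕ} (s : ℕ → Matrix (Fin p) (Fin q) ℂ) :
    ℕ → Matrix (Fin q) (Fin p) ℂ
  | 0 => mp (s 0)
  | (j+1) => -(mp (s 0) * ∑ l : Fin (j+1), s (j+1 - l.val) * recip s l.val)
termination_by j => j
decreasing_by exact l.isLt

noncomputable def shiftA {p q : ℕ} (α : ℂ) (s : ℕ → Matrix (Fin p) (Fin q) ℂ) :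
    ℕ → Matrix (Fin p) (Fin q) ℂ
  | 0 => s 0
  | (j+1) => (-α) • s j + s (j+1)

noncomputable def recipA {p q : ℕ} (α : ℂ) (s : ℕ → Matrix (Fin p) (Fin q) ℂ) :
    ℕ → Matrix (Fin q) (Fin p) ℂ :=
  recip (shiftA α s)

/-- block Hankel matrix H_n = [s_{j+k}]_{j,k=0}^{n}. -/
def hankelMat {p q : ℕ} (s : ℕ → Matrix (Fin p) (Fin q) ℂ) (n : ℕ) :
    Matrix (Fin (n + 1) × Fin p) (Fin (n + 1) × Fin q) ℂ :=
  Matrix.of fun jk lm => s (jk.1.val + lm.1.val) jk.2 lm.2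

/-- block Hankel matrix K_n = [s_{j+k+1}]_{j,k=0}^{n}. -/
def hankelKMat {p q : ℕ} (s : ℕ → Matrix (Fin p) (Fin q) ℂ) (n : ℕ) :
    Matrix (Fin (n + 1) × Fin p) (Fin (n + 1) × Fin q) ℂ :=
  Matrix.of fun jk lm => s (jk.1.val + lm.1.val + 1) jk.2 lm.2

/-- the class K^{≥}_{q,κ,α} of α-Stieltjes right-nonnegative definite sequences. -/
def Kgg {q : ℕ} (α : ℝ) (κ : ℕ∞) (s : ℕ → Matrix (Fin q) (Fin q) ℂ) : Prop :=
  (∀ n : ℕ, ((2 * n : ℕ) : ℕ∞) ≤ κ → (hankelMat s n).PosSemidef) ∧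
  (∀ n : ℕ, ((2 * n + 1 : ℕ) : ℕ∞) ≤ κ →
    ((-(α : ℂ)) • hankelMat s n + hankelKMat s n).PosSemidef)

lemma isMP_unique {n : Type*} [Fintype n] {A B C : Matrix n n ℂ}
    (hB : IsMP A B) (hC : IsMP A C) : B = C := by
  obtain ⟨aba, bab, hab, hba⟩ := hB
  obtain ⟨aca, cac, hac, hca⟩ := hC
  have hABC : A * B = A * C := by
    have h1 : A * B = A * C * (A * B) := by
      conv_lhs => rw [← aca]
      noncomm_ring
    have h2 : A * B = A * B * (A * C) := by
      conv_lhs => rw [← hab, h1]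
      rw [conjTranspose_mul, hab, hac]
    calc A * B = A * B * (A * C) := h2
      _ = (A * B * A) * C := by noncomm_ring
      _ = A * C := by rw [aba]
  have hBAC : B * A = C * A := by
    have h1 : B * A = B * A * (C * A) := by
      conv_lhs => rw [← aca]
      noncomm_ring
    have h2 : B * A = C * A * (B * A) := by
      conv_lhs => rw [← hba, h1]
      rw [conjTranspose_mul, hba, hca]
    calc B * A = C * A * (B * A) := h2
      _ = C * (A * B * A) := by noncomm_ring
      _ = C * A := by rw [aba]
  calc B = B * A * B := bab.symm
    _ = B * (A * C) := by rw [mul_assoc, hABC]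
    _ = (C * A) * C := by rw [← mul_assoc, hBAC]
    _ = C := cac

lemma mp_isMP {m n : Type*} [Fintype m] [Fintype n] {A : Matrix m n ℂ}
    (h : ∃ B, IsMP A B) : IsMP A (mp A) := by
  rw [mp, dif_pos h]; exact h.choose_spec

lemma exists_isMP {n : Type*} [Fintype n] [DecidableEq n] {A : Matrix n n ℂ}
    (hA : A.IsHermitian) : ∃ B, IsMP A B := by
  set U : Matrix n n ℂ := (hA.eigenvectorUnitary : Matrix n n ℂ) with hU
  have key : ∀ f g : n → ℂ,
      (U * diagonal f * star U) * (U * diagonal g * star U)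
        = U * diagonal (fun i => f i * g i) * star U := by
    intro f g
    have h1 : star U * (U * diagonal g * star U) = diagonal g * star U := by
      rw [← mul_assoc, ← mul_assoc, Matrix.mem_unitaryGroup_iff'.mp hA.eigenvectorUnitary.2,
        one_mul]
    rw [mul_assoc (U * diagonal f) (star U), h1, ← mul_assoc (U * diagonal f), mul_assoc U,
      diagonal_mul_diagonal]
  have hstar : ∀ f : n → ℂ, (∀ i, star (f i) = f i) →
      (U * diagonal f * star U)ᴴ = U * diagonal f * star U := by
    intro f hf
    rw [conjTranspose_mul, conjTranspose_mul, diagonal_conjTranspose]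
    have h1 : (star U)ᴴ = U := by
      rw [star_eq_conjTranspose, conjTranspose_conjTranspose]
    have h2 : star f = f := funext hf
    rw [h1, h2, star_eq_conjTranspose, mul_assoc]
  set d : n → ℂ := fun i => (hA.eigenvalues i : ℂ) with hd
  have hdr : ∀ i, star (d i) = d i := by
    intro i
    simp [hd, Complex.star_def, Complex.conj_ofReal]
  have hspec : A = U * diagonal d * star U := by
    simpa [hd, Function.comp_def] using hA.spectral_theorem
  refine ⟨U * diagonal (fun i => (d i)⁻¹) * star U, ?_, ?_, ?_, ?_⟩
  · rw [hspec, key, key]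
    have h3 : (fun i => d i * (d i)⁻¹ * d i) = d := by
      funext i
      rcases eq_or_ne (d i) 0 with h | h
      · simp [h]
      · field_simp
    rw [h3]
  · rw [hspec, key, key]
    have h3 : (fun i => (d i)⁻¹ * d i * (d i)⁻¹) = fun i => (d i)⁻¹ := by
      funext i
      rcases eq_or_ne (d i) 0 with h | h
      · simp [h]
      · field_simp
    rw [h3]
  · rw [hspec, key]
    exact hstar _ fun i => by
      rw [star_mul', star_inv₀, hdr]
  · rw [hspec, key]
    exact hstar _ fun i => by
      rw [star_mul', star_inv₀, hdr]

section Core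

variable {q : ℕ} (u : ℕ → Matrix (Fin q) (Fin q) ℂ)

lemma recip_zero : recip u 0 = mp (u 0) := by rw [recip]

lemma recip_succ (j : ℕ) :
    recip u (j+1) = -(mp (u 0) * ∑ l ∈ Finset.range (j+1), u (j+1-l) * recip u l) := by
  rw [recip, Finset.sum_range fun l => u (j+1-l) * recip u l]

/-- partial convolutions -/
noncomputable def aaS (m : ℕ) : Matrix (Fin q) (Fin q) ℂ :=
  ∑ l ∈ Finset.range (m+1), u (m-l) * recip u l

noncomputable def bbS (m : ℕ) : Matrix (Fin q) (Fin q) ℂ :=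
  ∑ l ∈ Finset.range (m+1), recip u l * u (m-l)

lemma aaS_zero : aaS u 0 = u 0 * mp (u 0) := by
  rw [aaS, Finset.sum_range_one, recip_zero]

lemma bbS_zero : bbS u 0 = mp (u 0) * u 0 := by
  rw [bbS, Finset.sum_range_one, recip_zero]

lemma tri_comm {M : Type*} [AddCommMonoid M] (F : ℕ → ℕ → M) (m : ℕ) :
    ∑ p ∈ Finset.range (m+1), ∑ l ∈ Finset.range (m+1-p), F p l
      = ∑ p ∈ Finset.range (m+1), ∑ l ∈ Finset.range (m+1-p), F l p := by
  rw [Finset.sum_sigma', Finset.sum_sigma']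
  refine Finset.sum_nbij' (fun x => ⟨x.2, x.1⟩) (fun x => ⟨x.2, x.1⟩) ?_ ?_ ?_ ?_ ?_ <;>
    rintro ⟨a, b⟩ h <;>
    simp only [Finset.mem_sigma, Finset.mem_range] at * <;>
    omega

variable (hB : IsMP (u 0) (mp (u 0)))
include hB

lemma QcL (m : ℕ) : mp (u 0) * u 0 * recip u m = recip u m := by
  cases m with
  | zero => rw [recip_zero]; exact hB.2.1
  | succ j =>
    rw [recip_succ, mul_neg, ← mul_assoc, hB.2.1]

lemma cPR (m : ℕ) : recip u m * (u 0 * mp (u 0)) = recip u m := by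
  induction m using Nat.strong_induction_on with
  | _ m ih =>
    match m with
    | 0 =>
      rw [recip_zero, ← mul_assoc]; exact hB.2.1
    | (j+1) =>
      rw [recip_succ, neg_mul, neg_inj, mul_assoc, Finset.sum_mul]
      congr 1
      refine Finset.sum_congr rfl fun l hl => ?_
      rw [mul_assoc, ih l (Finset.mem_range.mp hl)]

lemma BaaZ (m : ℕ) : mp (u 0) * aaS u (m+1) = 0 := by
  rw [aaS, Finset.sum_range_succ, Nat.sub_self, mul_add, ← mul_assoc, QcL u hB, recip_succ,
    add_neg_cancel]


lemma cAaZ (p r : ℕ) : recip u p * aaS u (r+1) = 0 := by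
  rw [← cPR u hB p, mul_assoc, mul_assoc, BaaZ u hB, mul_zero, mul_zero]

lemma DC (m : ℕ) :
    ∑ p ∈ Finset.range (m+1), recip u p * aaS u (m-p)
      = ∑ p ∈ Finset.range (m+1), bbS u p * recip u (m-p) := by
  have lhs : ∑ p ∈ Finset.range (m+1), recip u p * aaS u (m-p)
      = ∑ p ∈ Finset.range (m+1), ∑ l ∈ Finset.range (m+1-p),
          recip u p * (u (m-p-l) * recip u l) := by
    refine Finset.sum_congr rfl fun p hp => ?_
    have hp' : p ≤ m := by have := Finset.mem_range.mp hp; omega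
    have e1 : m - p + 1 = m + 1 - p := by omega
    rw [aaS, Finset.mul_sum, e1]
  have rhs : ∑ p ∈ Finset.range (m+1), bbS u p * recip u (m-p)
      = ∑ p ∈ Finset.range (m+1), ∑ l ∈ Finset.range (m+1-p),
          recip u l * (u (m-l-p) * recip u p) := by
    rw [← Finset.sum_range_reflect]
    refine Finset.sum_congr rfl fun p hp => ?_
    have hp' : p ≤ m := by have := Finset.mem_range.mp hp; omega
    have e1 : m + 1 - 1 - p = m - p := by omega
    have e2 : m - (m - p) = p := by omega
    have e3 : m - p + 1 = m + 1 - p := by omega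
    rw [e1, e2, bbS, Finset.sum_mul, e3]
    refine Finset.sum_congr rfl fun l hl => ?_
    have hl' : l ≤ m - p := by have := Finset.mem_range.mp hl; omega
    have e4 : m - p - l = m - l - p := by omega
    rw [mul_assoc, e4]
  rw [lhs, rhs]
  exact tri_comm (fun a b => recip u a * (u (m-a-b) * recip u b)) m

lemma DC_lhs (m : ℕ) : ∑ p ∈ Finset.range (m+1), recip u p * aaS u (m-p) = recip u m := by
  rw [Finset.sum_range_succ, Nat.sub_self, aaS_zero, cPR u hB]
  have h0 : ∀ p ∈ Finset.range m, recip u p * aaS u (m-p) = 0 := by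
    intro p hp
    have hp' : p < m := Finset.mem_range.mp hp
    have h1 : m - p = (m - p - 1) + 1 := by omega
    rw [h1, cAaZ u hB]
  rw [Finset.sum_eq_zero h0, zero_add]

lemma Zlem (m : ℕ) :
    ∑ p ∈ Finset.range m, bbS u (p+1) * recip u (m-(p+1)) = 0 := by
  have hdc := DC u hB m
  rw [DC_lhs u hB, Finset.sum_range_succ' (fun p => bbS u p * recip u (m-p)) m] at hdc
  rw [Nat.sub_zero, bbS_zero, QcL u hB] at hdc
  exact (right_eq_add.mp hdc)

lemma bbB (m : ℕ) : bbS u (m+1) * mp (u 0) = 0 := by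
  induction m using Nat.strong_induction_on with
  | _ m ih =>
    have hz := Zlem u hB (m+1)
    rw [Finset.sum_range_succ] at hz
    have hs : ∀ p ∈ Finset.range m, bbS u (p+1) * recip u (m+1-(p+1)) = 0 := by
      intro p hp
      have hp' := Finset.mem_range.mp hp
      rw [← QcL u hB (m+1-(p+1)), ← mul_assoc, ← mul_assoc, ih p hp', zero_mul, zero_mul]
    rw [Finset.sum_eq_zero hs, zero_add, Nat.sub_self, recip_zero] at hz
    exact hz

lemma R_rec (m : ℕ) :
    recip u (m+1) = -((∑ l ∈ Finset.range (m+1), recip u l * u (m+1-l)) * mp (u 0)) := by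
  have h := bbB u hB m
  rw [bbS, Finset.sum_range_succ, Nat.sub_self, add_mul, mul_assoc, cPR u hB,
    add_eq_zero_iff_eq_neg] at h
  rw [h, neg_neg]

lemma mp_herm (h0 : (u 0)ᴴ = u 0) : (mp (u 0))ᴴ = mp (u 0) := by
  have hmp : IsMP (u 0) ((mp (u 0))ᴴ) := by
    obtain ⟨aba, bab, hab, hba⟩ := hB
    refine ⟨?_, ?_, ?_, ?_⟩
    · have h2 := congrArg conjTranspose aba
      rw [conjTranspose_mul, conjTranspose_mul, h0] at h2
      rw [← mul_assoc] at h2; exact h2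
    · have h2 := congrArg conjTranspose bab
      rw [conjTranspose_mul, conjTranspose_mul, h0] at h2
      rw [← mul_assoc] at h2; exact h2
    · calc (u 0 * (mp (u 0))ᴴ)ᴴ = mp (u 0) * u 0 := by
            rw [conjTranspose_mul, conjTranspose_conjTranspose, h0]
        _ = (mp (u 0) * u 0)ᴴ := hba.symm
        _ = u 0 * (mp (u 0))ᴴ := by rw [conjTranspose_mul, h0]
    · calc ((mp (u 0))ᴴ * u 0)ᴴ = u 0 * mp (u 0) := by
            rw [conjTranspose_mul, conjTranspose_conjTranspose, h0]
        _ = (u 0 * mp (u 0))ᴴ := hab.symm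
        _ = (mp (u 0))ᴴ * u 0 := by rw [conjTranspose_mul, h0]
  exact (isMP_unique hB hmp).symm

lemma c_herm (m : ℕ) (hu : ∀ l, l ≤ m → (u l)ᴴ = u l) : (recip u m)ᴴ = recip u m := by
  induction m using Nat.strong_induction_on with
  | _ m ih =>
    match m, hu with
    | 0, hu => rw [recip_zero]; exact mp_herm u hB (hu 0 le_rfl)
    | (j+1), hu =>
      rw [recip_succ, conjTranspose_neg, conjTranspose_mul, Matrix.conjTranspose_sum]
      have h1 : ∀ l ∈ Finset.range (j+1), (u (j+1-l) * recip u l)ᴴ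
          = recip u l * u (j+1-l) := by
        intro l hl
        have hl' := Finset.mem_range.mp hl
        rw [conjTranspose_mul, ih l (by omega) (fun r hr => hu r (by omega)),
          hu (j+1-l) (by omega)]
      rw [Finset.sum_congr rfl h1, mp_herm u hB (hu 0 (by omega)), ← R_rec u hB, ← recip_succ]

lemma bsplit (N b : ℕ) :
    ∑ i ∈ Finset.range (N+1), recip u i * u (N+1+b-i)
      = bbS u (N+1+b) - ∑ d ∈ Finset.range (b+1), recip u (N+1+d) * u (b-d) := by
  have h1 : N+1+b+1 = (N+1) + (b+1) := by omega
  have h2 : ∑ d ∈ Finset.range (b+1), recip u (N+1+d) * u (b-d)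
      = ∑ d ∈ Finset.range (b+1), recip u (N+1+d) * u (N+1+b-(N+1+d)) := by
    refine Finset.sum_congr rfl fun d hd => ?_
    have hd' := Finset.mem_range.mp hd
    have e1 : b - d = N+1+b-(N+1+d) := by omega
    rw [e1]
  have h3 : bbS u (N+1+b)
      = (∑ i ∈ Finset.range (N+1), recip u i * u (N+1+b-i))
        + ∑ x ∈ Finset.range (b+1), recip u (N+1+x) * u (N+1+b-(N+1+x)) := by
    rw [bbS, h1]
    exact Finset.sum_range_add (fun l => recip u l * u (N+1+b-l)) (N+1) (b+1)
  rw [eq_sub_iff_add_eq, h2, h3]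

lemma core_even' (j k : ℕ) :
    ∑ i ∈ Finset.range (j+1), ∑ b ∈ Finset.range (k+1),
        recip u i * u (j+1+b-i) * recip u (k-b)
      = -recip u (j+k+1) := by
  rw [Finset.sum_comm]
  have h1 : ∀ b ∈ Finset.range (k+1),
      ∑ i ∈ Finset.range (j+1), recip u i * u (j+1+b-i) * recip u (k-b)
        = bbS u (j+1+b) * recip u (k-b)
          - (∑ d ∈ Finset.range (b+1), recip u (j+1+d) * u (b-d)) * recip u (k-b) := by
    intro b hb
    rw [← Finset.sum_mul, bsplit u hB, sub_mul]
  rw [Finset.sum_congr rfl h1, Finset.sum_sub_distrib]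
  have h2 : ∀ b ∈ Finset.range (k+1), bbS u (j+1+b) * recip u (k-b) = 0 := by
    intro b hb
    have hjb : j+1+b = (j+b)+1 := by omega
    rw [hjb, ← QcL u hB (k-b), ← mul_assoc, ← mul_assoc, bbB u hB, zero_mul, zero_mul]
  rw [Finset.sum_eq_zero h2, zero_sub, neg_inj]
  rw [← Finset.sum_range_reflect]
  have h3 : ∀ b ∈ Finset.range (k+1),
      (∑ d ∈ Finset.range ((k+1-1-b)+1), recip u (j+1+d) * u ((k+1-1-b)-d))
          * recip u (k-(k+1-1-b))
        = ∑ d ∈ Finset.range (k+1-b), recip u (j+1+d) * (u (k-b-d) * recip u b) := by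
    intro b hb
    have hb' : b ≤ k := by have := Finset.mem_range.mp hb; omega
    have e1 : k+1-1-b = k-b := by omega
    have e2 : k - (k - b) = b := by omega
    have e3 : (k-b)+1 = k+1-b := by omega
    rw [e1, e2, e3, Finset.sum_mul]
    refine Finset.sum_congr rfl fun d hd => ?_
    rw [mul_assoc]
  rw [Finset.sum_congr rfl h3,
    tri_comm (fun p l => recip u (j+1+l) * (u (k-p-l) * recip u p)) k]
  have h4 : ∀ p ∈ Finset.range (k+1),
      ∑ l ∈ Finset.range (k+1-p), recip u (j+1+p) * (u (k-l-p) * recip u l)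
        = recip u (j+1+p) * aaS u (k-p) := by
    intro p hp
    have hp' : p ≤ k := by have := Finset.mem_range.mp hp; omega
    have e3 : (k-p)+1 = k+1-p := by omega
    rw [aaS, Finset.mul_sum, e3]
    refine Finset.sum_congr rfl fun l hl => ?_
    have hl' : l < k+1-p := Finset.mem_range.mp hl
    have e4 : k - p - l = k - l - p := by omega
    rw [e4]
  rw [Finset.sum_congr rfl h4, Finset.sum_range_succ, Nat.sub_self, aaS_zero, cPR u hB]
  have h5 : ∀ p ∈ Finset.range k, recip u (j+1+p) * aaS u (k-p) = 0 := by
    intro p hp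
    have hp' : p < k := Finset.mem_range.mp hp
    have e5 : k - p = (k-p-1)+1 := by omega
    rw [e5, cAaZ u hB]
  rw [Finset.sum_eq_zero h5, zero_add]
  have e6 : j+1+k = j+k+1 := by omega
  rw [e6]

end Core

section Odd

variable {q : ℕ} (a : ℂ) (s : ℕ → Matrix (Fin q) (Fin q) ℂ)

lemma shiftA_zero : shiftA a s 0 = s 0 := rfl

lemma shiftA_succ (m : ℕ) : shiftA a s (m+1) = (-a) • s m + s (m+1) := rfl

/-- The sequence d_m = c_m - a • c_{m-1}. -/
noncomputable def ddS : ℕ → Matrix (Fin q) (Fin q) ℂ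
  | 0 => recip (shiftA a s) 0
  | (m+1) => recip (shiftA a s) (m+1) - a • recip (shiftA a s) m

lemma ddS_zero : ddS a s 0 = recip (shiftA a s) 0 := rfl

lemma ddS_succ (m : ℕ) :
    ddS a s (m+1) = recip (shiftA a s) (m+1) - a • recip (shiftA a s) m := rfl

lemma PC1 (N M : ℕ) (hNM : N ≤ M) :
    ∑ i ∈ Finset.range (N+1), ddS a s i * s (M-i)
      = (∑ i ∈ Finset.range N, recip (shiftA a s) i * shiftA a s (M-i))
        + recip (shiftA a s) N * s (M-N) := by
  induction N with
  | zero =>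
    simp [Finset.sum_range_one, ddS_zero]
  | succ N ih =>
    have hN : N ≤ M := by omega
    rw [Finset.sum_range_succ, ih hN, Finset.sum_range_succ, ddS_succ]
    have e1 : M - N = (M-(N+1))+1 := by omega
    rw [e1, shiftA_succ]
    have e2 : M - (N+1) + 1 = M - N := by omega
    rw [e2]
    rw [sub_mul, smul_mul_assoc, mul_add, mul_smul_comm, neg_smul]
    abel

lemma PC2 (N M : ℕ) (hNM : N ≤ M) :
    ∑ i ∈ Finset.range (N+1), s (M-i) * ddS a s i
      = (∑ i ∈ Finset.range N, shiftA a s (M-i) * recip (shiftA a s) i)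
        + s (M-N) * recip (shiftA a s) N := by
  induction N with
  | zero =>
    simp [Finset.sum_range_one, ddS_zero]
  | succ N ih =>
    have hN : N ≤ M := by omega
    rw [Finset.sum_range_succ, ih hN, Finset.sum_range_succ, ddS_succ]
    have e1 : M - N = (M-(N+1))+1 := by omega
    rw [e1, shiftA_succ]
    have e2 : M - (N+1) + 1 = M - N := by omega
    rw [e2]
    rw [mul_sub, mul_smul_comm, add_mul, smul_mul_assoc, neg_smul]
    abel

lemma saa (k : ℕ) :
    ∑ b ∈ Finset.range (k+1+1), s b * ddS a s (k+1-b) = aaS (shiftA a s) (k+1) := by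
  rw [← Finset.sum_range_reflect]
  have h1 : ∀ b ∈ Finset.range (k+1+1),
      s (k+1+1-1-b) * ddS a s (k+1-(k+1+1-1-b)) = s (k+1-b) * ddS a s b := by
    intro b hb
    have hb' : b ≤ k+1 := by have := Finset.mem_range.mp hb; omega
    have e1 : k+1+1-1-b = k+1-b := by omega
    have e2 : k+1-(k+1-b) = b := by omega
    rw [e1, e2]
  rw [Finset.sum_congr rfl h1, PC2 a s (k+1) (k+1) le_rfl, Nat.sub_self]
  have h2 : aaS (shiftA a s) (k+1)
      = (∑ i ∈ Finset.range (k+1), shiftA a s (k+1-i) * recip (shiftA a s) i)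
        + s 0 * recip (shiftA a s) (k+1) := by
    rw [aaS, Finset.sum_range_succ, Nat.sub_self, shiftA_zero]
  rw [h2]

lemma core_odd (j k : ℕ) (hB : IsMP (shiftA a s 0) (mp (shiftA a s 0))) :
    ∑ p ∈ Finset.range (j+1+1), ∑ b ∈ Finset.range (k+1+1),
        ddS a s (j+1-p) * s (p+b) * ddS a s (k+1-b)
      = a • recip (shiftA a s) (j+k+1) - recip (shiftA a s) (j+k+2) := by
  rw [Finset.sum_comm]
  have h1 : ∀ b ∈ Finset.range (k+1+1),
      ∑ p ∈ Finset.range (j+1+1), ddS a s (j+1-p) * s (p+b) * ddS a s (k+1-b)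
        = ((∑ i ∈ Finset.range (j+1), recip (shiftA a s) i * shiftA a s (j+1+b-i))
            + recip (shiftA a s) (j+1) * s b) * ddS a s (k+1-b) := by
    intro b hb
    rw [← Finset.sum_mul]
    congr 1
    rw [← Finset.sum_range_reflect]
    have h2 : ∀ p ∈ Finset.range (j+1+1),
        ddS a s (j+1-(j+1+1-1-p)) * s ((j+1+1-1-p)+b) = ddS a s p * s (j+1+b-p) := by
      intro p hp
      have hp' : p ≤ j+1 := by have := Finset.mem_range.mp hp; omega
      have e1 : j+1+1-1-p = j+1-p := by omega
      have e2 : j+1-(j+1-p) = p := by omega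
      have e3 : (j+1-p)+b = j+1+b-p := by omega
      rw [e1, e2, e3]
    rw [Finset.sum_congr rfl h2, PC1 a s (j+1) (j+1+b) (by omega)]
    have e4 : j+1+b-(j+1) = b := by omega
    rw [e4]
  rw [Finset.sum_congr rfl h1]
  simp only [add_mul]
  rw [Finset.sum_add_distrib]
  have h3 : ∑ b ∈ Finset.range (k+1+1),
      recip (shiftA a s) (j+1) * s b * ddS a s (k+1-b) = 0 := by
    have h3' : ∀ b ∈ Finset.range (k+1+1),
        recip (shiftA a s) (j+1) * s b * ddS a s (k+1-b)
          = recip (shiftA a s) (j+1) * (s b * ddS a s (k+1-b)) := by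
      intro b hb; rw [mul_assoc]
    rw [Finset.sum_congr rfl h3', ← Finset.mul_sum, saa a s k, cAaZ (shiftA a s) hB (j+1) k]
  rw [h3, add_zero]
  simp only [Finset.sum_mul]
  rw [Finset.sum_comm]
  have h4 : ∀ i ∈ Finset.range (j+1),
      ∑ b ∈ Finset.range (k+1+1),
          recip (shiftA a s) i * shiftA a s (j+1+b-i) * ddS a s (k+1-b)
        = (∑ b ∈ Finset.range (k+1+1),
            recip (shiftA a s) i * shiftA a s (j+1+b-i) * recip (shiftA a s) (k+1-b))
          - a • ∑ b ∈ Finset.range (k+1),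
              recip (shiftA a s) i * shiftA a s (j+1+b-i) * recip (shiftA a s) (k-b) := by
    intro i hi
    have hsplit : ∑ b ∈ Finset.range (k+1+1),
        recip (shiftA a s) i * shiftA a s (j+1+b-i) * recip (shiftA a s) (k+1-b)
          = (∑ b ∈ Finset.range (k+1),
              recip (shiftA a s) i * shiftA a s (j+1+b-i) * recip (shiftA a s) (k+1-b))
            + recip (shiftA a s) i * shiftA a s (j+1+(k+1)-i) * recip (shiftA a s) 0 := by
      rw [Finset.sum_range_succ, Nat.sub_self]
    rw [Finset.sum_range_succ, Nat.sub_self, ddS_zero, hsplit]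
    have h5 : ∀ b ∈ Finset.range (k+1),
        recip (shiftA a s) i * shiftA a s (j+1+b-i) * ddS a s (k+1-b)
          = recip (shiftA a s) i * shiftA a s (j+1+b-i) * recip (shiftA a s) (k+1-b)
            - a • (recip (shiftA a s) i * shiftA a s (j+1+b-i) * recip (shiftA a s) (k-b)) := by
      intro b hb
      have hb' : b ≤ k := by have := Finset.mem_range.mp hb; omega
      have e1 : k+1-b = (k-b)+1 := by omega
      rw [e1, ddS_succ, mul_sub, mul_smul_comm, ← e1]
    rw [Finset.sum_congr rfl h5, Finset.sum_sub_distrib, ← Finset.smul_sum,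
      sub_add_eq_add_sub]
  rw [Finset.sum_congr rfl h4, Finset.sum_sub_distrib, ← Finset.smul_sum,
    core_even' (shiftA a s) hB j k, core_even' (shiftA a s) hB j (k+1)]
  have e6 : j+(k+1)+1 = j+k+2 := by omega
  rw [e6, smul_neg]
  abel

end Odd

section Block

lemma sum_swap_aux {α β γ : Type*} [Fintype α] [Fintype β] [Fintype γ] {Mo : Type*}
    [AddCommMonoid Mo] (F : α → β → γ → Mo) :
    ∑ b : β, ∑ y : γ, ∑ a : α, F a b y = ∑ a : α, ∑ b : β, ∑ y : γ, F a b y :=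
  (Finset.sum_congr rfl (fun _ _ => Finset.sum_comm)).trans Finset.sum_comm

lemma block_entry {N M q : ℕ} (cL : Fin N → Fin M → Matrix (Fin q) (Fin q) ℂ)
    (U : Fin M → Fin M → Matrix (Fin q) (Fin q) ℂ) (j k : Fin N) (p r : Fin q) :
    ((Matrix.of fun (jp : Fin N × Fin q) (ax : Fin M × Fin q) => cL jp.1 ax.1 jp.2 ax.2) *
        (Matrix.of fun (ax bx : Fin M × Fin q) => U ax.1 bx.1 ax.2 bx.2) *
        (Matrix.of fun (kp : Fin N × Fin q) (bx : Fin M × Fin q) => cL kp.1 bx.1 kp.2 bx.2)ᴴ)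
      (j,p) (k,r)
    = (∑ a : Fin M, ∑ b : Fin M, cL j a * U a b * (cL k b)ᴴ) p r := by
  simp only [Matrix.mul_apply, Matrix.conjTranspose_apply, Matrix.of_apply, Matrix.sum_apply,
    Fintype.sum_prod_type, Finset.sum_mul]
  exact sum_swap_aux (fun a b y => ∑ x : Fin q, cL j a p x * U a b x y * star (cL k b r y))

end Block

section FinBridge

lemma shrink_sum {Mo : Type*} [AddCommMonoid Mo] {n j : ℕ} (hj : j ≤ n) (f : ℕ → Mo)
    (h0 : ∀ a, j < a → f a = 0) :
    ∑ a ∈ Finset.range (n+1), f a = ∑ a ∈ Finset.range (j+1), f a := by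
  refine (Finset.sum_subset (Finset.range_subset_range.mpr (by omega)) fun x hx hx' => ?_).symm
  have h1 := Finset.mem_range.mp hx
  have h2 : ¬ x < j+1 := fun h => hx' (Finset.mem_range.mpr h)
  exact h0 x (by omega)

variable {q : ℕ} (u : ℕ → Matrix (Fin q) (Fin q) ℂ) (hB : IsMP (u 0) (mp (u 0)))
include hB

lemma core_even (j k : ℕ) :
    ∑ a ∈ Finset.range (j+1), ∑ b ∈ Finset.range (k+1),
        recip u (j-a) * u (a+b+1) * recip u (k-b) = -recip u (j+k+1) := by
  refine ((Finset.sum_range_reflect (fun a => ∑ b ∈ Finset.range (k+1),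
      recip u (j-a) * u (a+b+1) * recip u (k-b)) (j+1)).symm).trans ?_
  rw [← core_even' u hB j k]
  refine Finset.sum_congr rfl fun i hi => Finset.sum_congr rfl fun b hb => ?_
  have hi' : i ≤ j := by have := Finset.mem_range.mp hi; omega
  have e1 : j+1-1-i = j-i := by omega
  have e2 : j-(j-i) = i := by omega
  have e3 : (j-i)+b+1 = j+1+b-i := by omega
  rw [e1, e2, e3]

lemma fin_even (n j k : ℕ) (hj : j ≤ n) (hk : k ≤ n)
    (hherm : ∀ l, l ≤ n → (recip u l)ᴴ = recip u l) :
    ∑ a : Fin (n+1), ∑ b : Fin (n+1),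
        (if (a:ℕ) ≤ j then recip u (j - (a:ℕ)) else 0) * u ((a:ℕ)+(b:ℕ)+1) *
          (if (b:ℕ) ≤ k then recip u (k - (b:ℕ)) else 0)ᴴ
      = -recip u (j+k+1) := by
  have hfin : ∀ F : ℕ → Matrix (Fin q) (Fin q) ℂ,
      ∑ b : Fin (n+1), F (b:ℕ) = ∑ b ∈ Finset.range (n+1), F b :=
    fun F => Fin.sum_univ_eq_sum_range F (n+1)
  rw [hfin (fun a => ∑ b : Fin (n+1),
      (if a ≤ j then recip u (j - a) else 0) * u (a+(b:ℕ)+1) *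
        (if (b:ℕ) ≤ k then recip u (k - (b:ℕ)) else 0)ᴴ)]
  have h1 : ∀ a ∈ Finset.range (n+1),
      (∑ b : Fin (n+1), (if a ≤ j then recip u (j - a) else 0) * u (a+(b:ℕ)+1) *
          (if (b:ℕ) ≤ k then recip u (k - (b:ℕ)) else 0)ᴴ)
        = ∑ b ∈ Finset.range (n+1), (if a ≤ j then recip u (j - a) else 0) * u (a+b+1) *
            (if b ≤ k then recip u (k - b) else 0)ᴴ := by
    intro a _
    exact hfin (fun b => (if a ≤ j then recip u (j - a) else 0) * u (a+b+1) *
      (if b ≤ k then recip u (k - b) else 0)ᴴ)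
  rw [Finset.sum_congr rfl h1]
  rw [shrink_sum hj _ (fun a ha => by
    rw [if_neg (by omega)]
    exact Finset.sum_eq_zero fun b _ => by rw [zero_mul, zero_mul])]
  have h2 : ∀ a ∈ Finset.range (j+1),
      (∑ b ∈ Finset.range (n+1), (if a ≤ j then recip u (j - a) else 0) * u (a+b+1) *
          (if b ≤ k then recip u (k - b) else 0)ᴴ)
        = ∑ b ∈ Finset.range (k+1), recip u (j-a) * u (a+b+1) * recip u (k-b) := by
    intro a ha
    have ha' : a ≤ j := by have := Finset.mem_range.mp ha; omega
    rw [shrink_sum hk _ (fun b hb => by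
      rw [if_neg (show ¬ b ≤ k by omega), conjTranspose_zero, mul_zero])]
    refine Finset.sum_congr rfl fun b hb => ?_
    have hb' : b ≤ k := by have := Finset.mem_range.mp hb; omega
    rw [if_pos ha', if_pos hb', hherm (k-b) (by omega)]
  rw [Finset.sum_congr rfl h2]
  exact core_even u hB j k

end FinBridge

section OddBridge

variable {q : ℕ} (a : ℂ) (s : ℕ → Matrix (Fin q) (Fin q) ℂ)

lemma ddS_herm (ha : star a = a) (m : ℕ)
    (hc : ∀ l, l ≤ m → (recip (shiftA a s) l)ᴴ = recip (shiftA a s) l) :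
    (ddS a s m)ᴴ = ddS a s m := by
  cases m with
  | zero => rw [ddS_zero]; exact hc 0 le_rfl
  | succ m =>
    rw [ddS_succ, conjTranspose_sub, conjTranspose_smul, ha, hc (m+1) le_rfl,
      hc m (by omega)]

lemma fin_odd (n j k : ℕ) (hj : j ≤ n) (hk : k ≤ n)
    (hB : IsMP (shiftA a s 0) (mp (shiftA a s 0)))
    (hdd : ∀ l, l ≤ n+1 → (ddS a s l)ᴴ = ddS a s l) :
    ∑ p : Fin (n+1+1), ∑ b : Fin (n+1+1),
        (if (p:ℕ) ≤ j+1 then ddS a s (j+1 - (p:ℕ)) else 0) * s ((p:ℕ)+(b:ℕ)) *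
          (if (b:ℕ) ≤ k+1 then ddS a s (k+1 - (b:ℕ)) else 0)ᴴ
      = a • recip (shiftA a s) (j+k+1) - recip (shiftA a s) (j+k+2) := by
  have hfin : ∀ F : ℕ → Matrix (Fin q) (Fin q) ℂ,
      ∑ b : Fin (n+1+1), F (b:ℕ) = ∑ b ∈ Finset.range (n+1+1), F b :=
    fun F => Fin.sum_univ_eq_sum_range F (n+1+1)
  rw [hfin (fun p => ∑ b : Fin (n+1+1),
      (if p ≤ j+1 then ddS a s (j+1 - p) else 0) * s (p+(b:ℕ)) *
        (if (b:ℕ) ≤ k+1 then ddS a s (k+1 - (b:ℕ)) else 0)ᴴ)]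
  have h1 : ∀ p ∈ Finset.range (n+1+1),
      (∑ b : Fin (n+1+1), (if p ≤ j+1 then ddS a s (j+1 - p) else 0) * s (p+(b:ℕ)) *
          (if (b:ℕ) ≤ k+1 then ddS a s (k+1 - (b:ℕ)) else 0)ᴴ)
        = ∑ b ∈ Finset.range (n+1+1), (if p ≤ j+1 then ddS a s (j+1 - p) else 0) * s (p+b) *
            (if b ≤ k+1 then ddS a s (k+1 - b) else 0)ᴴ := by
    intro p _
    exact hfin (fun b => (if p ≤ j+1 then ddS a s (j+1 - p) else 0) * s (p+b) *
      (if b ≤ k+1 then ddS a s (k+1 - b) else 0)ᴴ)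
  rw [Finset.sum_congr rfl h1]
  rw [shrink_sum (show j+1 ≤ n+1 by omega) _ (fun p hp => by
    rw [if_neg (show ¬ p ≤ j+1 by omega)]
    exact Finset.sum_eq_zero fun b _ => by rw [zero_mul, zero_mul])]
  have h2 : ∀ p ∈ Finset.range (j+1+1),
      (∑ b ∈ Finset.range (n+1+1), (if p ≤ j+1 then ddS a s (j+1 - p) else 0) * s (p+b) *
          (if b ≤ k+1 then ddS a s (k+1 - b) else 0)ᴴ)
        = ∑ b ∈ Finset.range (k+1+1), ddS a s (j+1-p) * s (p+b) * ddS a s (k+1-b) := by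
    intro p hp
    have hp' : p ≤ j+1 := by have := Finset.mem_range.mp hp; omega
    rw [shrink_sum (show k+1 ≤ n+1 by omega) _ (fun b hb => by
      rw [if_neg (show ¬ b ≤ k+1 by omega), conjTranspose_zero, mul_zero])]
    refine Finset.sum_congr rfl fun b hb => ?_
    have hb' : b ≤ k+1 := by have := Finset.mem_range.mp hb; omega
    rw [if_pos hp', if_pos hb', hdd (k+1-b) (by omega)]
  rw [Finset.sum_congr rfl h2]
  exact core_odd a s j k hB

end OddBridge

section Herm

lemma herm_of_hankel {q : ℕ} {s : ℕ → Matrix (Fin q) (Fin q) ℂ} {n : ℕ}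
    (h : (hankelMat s n).PosSemidef) :
    ∀ l, l ≤ 2*n → (s l)ᴴ = s l := by
  intro l hl
  have hH : (hankelMat s n)ᴴ = hankelMat s n := h.isHermitian
  ext p r
  have h2 := congrFun (congrFun hH ((⟨min l n, by omega⟩ : Fin (n+1)), p))
    ((⟨l - min l n, by omega⟩ : Fin (n+1)), r)
  rw [conjTranspose_apply] at h2
  simp only [hankelMat, Matrix.of_apply] at h2
  rw [conjTranspose_apply]
  have e1 : (l - min l n) + min l n = l := by omega
  have e2 : min l n + (l - min l n) = l := by omega
  rw [e1, e2] at h2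
  exact h2

end Herm

/-- Prop 5.12(a): the shortened negative α-reciprocal sequence of an α-Stieltjes
    right-nonnegative definite sequence is again α-Stieltjes right-nonnegative definite. -/
theorem stmt10 {q : ℕ} (α : ℝ) (κ : ℕ∞) (hκ : 1 ≤ κ)
    (s : ℕ → Matrix (Fin q) (Fin q) ℂ) (hs : Kgg α κ s) :
    Kgg α (κ - 1) (fun j => -(recipA (α : ℂ) s (j + 1))) := by
  obtain ⟨he, ho⟩ := hs
  have hs0 : (s 0).PosSemidef := by
    have h0 := he 0 (by simp)
    have hsub : s 0 = (hankelMat s 0).submatrix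
        (fun i => ((0 : Fin 1), i)) (fun i => ((0 : Fin 1), i)) := by
      ext i j; rfl
    rw [hsub]; exact h0.submatrix _
  have hsH : (s 0)ᴴ = s 0 := hs0.isHermitian
  have hB : IsMP (shiftA (α:ℂ) s 0) (mp (shiftA (α:ℂ) s 0)) := by
    rw [shiftA_zero]
    exact mp_isMP (exists_isMP hsH)
  have hκ1 : ∀ m : ℕ, ((m : ℕ) : ℕ∞) ≤ κ - 1 → ((m+1 : ℕ) : ℕ∞) ≤ κ := by
    intro m hm
    cases κ with
    | top => exact le_top
    | coe N =>
      have hN : 1 ≤ N := by exact_mod_cast hκ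
      have hc : ((N - 1 : ℕ) : ℕ∞) = (N : ℕ∞) - 1 := by
        push_cast
        rfl
      rw [← hc] at hm
      have hm' : m ≤ N - 1 := by exact_mod_cast hm
      exact_mod_cast (show m+1 ≤ N by omega)
  -- hermitian of s entries up to 2*n implies hermitianness of shiftA and recip
  have hushift : ∀ n : ℕ, (∀ l, l ≤ 2*n → (s l)ᴴ = s l) →
      ∀ l, l ≤ 2*n → (shiftA (α:ℂ) s l)ᴴ = shiftA (α:ℂ) s l := by
    intro n hsh l hl
    cases l with
    | zero => rw [shiftA_zero]; exact hsH
    | succ m =>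
      rw [shiftA_succ, conjTranspose_add, conjTranspose_smul, hsh m (by omega),
        hsh (m+1) (by omega)]
      congr 1
      simp [Complex.star_def, Complex.conj_ofReal]
  constructor
  · -- even condition for the transformed sequence
    intro n hn
    have h2n1 : ((2*n+1 : ℕ) : ℕ∞) ≤ κ := hκ1 (2*n) hn
    have h2n : ((2*n : ℕ) : ℕ∞) ≤ κ :=
      le_trans (by exact_mod_cast (show (2*n : ℕ) ≤ 2*n+1 by omega)) h2n1
    have hGpsd : (hankelKMat (shiftA (α:ℂ) s) n).PosSemidef := by
      have hG := ho n h2n1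
      have heq : ((-(α:ℂ)) • hankelMat s n + hankelKMat s n)
          = hankelKMat (shiftA (α:ℂ) s) n := by
        ext jp kr
        simp [hankelMat, hankelKMat, shiftA_succ, Matrix.add_apply, Matrix.smul_apply]
      rw [← heq]; exact hG
    have hcherm : ∀ l, l ≤ n → (recip (shiftA (α:ℂ) s) l)ᴴ = recip (shiftA (α:ℂ) s) l := by
      intro l hl
      exact c_herm _ hB l (fun r hr =>
        hushift n (herm_of_hankel (he n h2n)) r (by omega))
    have hmain : hankelMat (fun j => -(recipA (α:ℂ) s (j + 1))) n
        = (Matrix.of fun (jp : Fin (n+1) × Fin q) (ax : Fin (n+1) × Fin q) =>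
              (if (ax.1:ℕ) ≤ (jp.1:ℕ) then recip (shiftA (α:ℂ) s) ((jp.1:ℕ) - (ax.1:ℕ))
                else 0) jp.2 ax.2)
            * hankelKMat (shiftA (α:ℂ) s) n
            * (Matrix.of fun (jp : Fin (n+1) × Fin q) (ax : Fin (n+1) × Fin q) =>
              (if (ax.1:ℕ) ≤ (jp.1:ℕ) then recip (shiftA (α:ℂ) s) ((jp.1:ℕ) - (ax.1:ℕ))
                else 0) jp.2 ax.2)ᴴ := by
      ext ⟨j, p⟩ ⟨k, r⟩
      have hbe := block_entry
        (cL := fun (j a : Fin (n+1)) =>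
          if (a:ℕ) ≤ (j:ℕ) then recip (shiftA (α:ℂ) s) ((j:ℕ) - (a:ℕ)) else 0)
        (U := fun (a b : Fin (n+1)) => shiftA (α:ℂ) s ((a:ℕ)+(b:ℕ)+1)) j k p r
      have h2 := fin_even (shiftA (α:ℂ) s) hB n (j:ℕ) (k:ℕ) (by omega) (by omega) hcherm
      rw [h2] at hbe
      exact (neg_apply _ _ _).symm.trans hbe.symm
    rw [hmain]
    exact hGpsd.mul_mul_conjTranspose_same _
  · -- odd condition for the transformed sequence
    intro n hn
    have h2n2 : ((2*n+1+1 : ℕ) : ℕ∞) ≤ κ := hκ1 (2*n+1) hn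
    have h2n1 : ((2*n+1 : ℕ) : ℕ∞) ≤ κ :=
      le_trans (by exact_mod_cast (show (2*n+1 : ℕ) ≤ 2*n+1+1 by omega)) h2n2
    have hHpsd : (hankelMat s (n+1)).PosSemidef := by
      refine he (n+1) ?_
      exact le_trans (by exact_mod_cast (show (2*(n+1) : ℕ) ≤ 2*n+1+1 by omega)) h2n2
    have hsherm : ∀ l, l ≤ 2*(n+1) → (s l)ᴴ = s l := herm_of_hankel hHpsd
    have hcherm : ∀ l, l ≤ n+1 →
        (recip (shiftA (α:ℂ) s) l)ᴴ = recip (shiftA (α:ℂ) s) l := by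
      intro l hl
      exact c_herm _ hB l (fun r hr => hushift (n+1) hsherm r (by omega))
    have hdd : ∀ l, l ≤ n+1 → (ddS (α:ℂ) s l)ᴴ = ddS (α:ℂ) s l := by
      intro l hl
      exact ddS_herm (α:ℂ) s (by simp [Complex.star_def, Complex.conj_ofReal]) l
        (fun r hr => hcherm r (by omega))
    have hmain : ((-(α:ℂ)) • hankelMat (fun j => -(recipA (α:ℂ) s (j + 1))) n
          + hankelKMat (fun j => -(recipA (α:ℂ) s (j + 1))) n)
        = (Matrix.of fun (jp : Fin (n+1) × Fin q) (ax : Fin (n+1+1) × Fin q) =>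
              (if (ax.1:ℕ) ≤ (jp.1:ℕ)+1 then ddS (α:ℂ) s ((jp.1:ℕ)+1 - (ax.1:ℕ))
                else 0) jp.2 ax.2)
            * hankelMat s (n+1)
            * (Matrix.of fun (jp : Fin (n+1) × Fin q) (ax : Fin (n+1+1) × Fin q) =>
              (if (ax.1:ℕ) ≤ (jp.1:ℕ)+1 then ddS (α:ℂ) s ((jp.1:ℕ)+1 - (ax.1:ℕ))
                else 0) jp.2 ax.2)ᴴ := by
      ext ⟨j, p⟩ ⟨k, r⟩
      have hbe := block_entry
        (cL := fun (j : Fin (n+1)) (a : Fin (n+1+1)) =>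
          if (a:ℕ) ≤ (j:ℕ)+1 then ddS (α:ℂ) s ((j:ℕ)+1 - (a:ℕ)) else 0)
        (U := fun (a b : Fin (n+1+1)) => s ((a:ℕ)+(b:ℕ))) j k p r
      have h2 := fin_odd (α:ℂ) s n (j:ℕ) (k:ℕ) (by omega) (by omega) hB hdd
      rw [h2] at hbe
      refine Eq.trans ?_ hbe.symm
      -- LHS entry computation
      simp only [Matrix.add_apply, Matrix.smul_apply, hankelMat, hankelKMat, Matrix.of_apply,
        Matrix.neg_apply, Matrix.sub_apply, smul_eq_mul]
      show (-(α:ℂ)) * (-(recipA (α:ℂ) s ((j:ℕ)+(k:ℕ)+1)) p r)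
          + (-(recipA (α:ℂ) s ((j:ℕ)+(k:ℕ)+1+1)) p r)
        = ((α:ℂ) • recip (shiftA (α:ℂ) s) ((j:ℕ)+(k:ℕ)+1)
            - recip (shiftA (α:ℂ) s) ((j:ℕ)+(k:ℕ)+2)) p r
      simp only [Matrix.sub_apply, Matrix.smul_apply, Matrix.neg_apply, smul_eq_mul, recipA]
      ring_nf
    rw [hmain]
    exact hHpsd.mul_mul_conjTranspose_same _
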